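/- For constants $\lambda, B, \alpha, d, t > 0$, $m > 0$, and $H$ Gamma distributed with shape $m$ and rate $m$ (density $f_H(h) = \frac{m^m}{\Gamma(m)} h^{m-1} e^{-mh}$), the LoS intensity measure $\Lambda^{L}_{Naka}([0,t]) = \mathbb{E}_H\left[2\pi\lambda \int_0^{\min\{d,\ t(BH)^{1/\alpha}\}} r\, dr\right]$ equals $\frac{\pi\lambda d^2}{\Gamma(m)}\Gamma\!\left(m, \tfrac{m}{B}\left(\tfrac{d}{t}\right)^{\alpha}\right) + \frac{\pi\lambda t^2}{\Gamma(m)}\left(\tfrac{B}{m}\right)^{2/\alpha}\gamma\!\left(\tfrac{2}{\alpha}+m, \tfrac{m}{B}\left(\tfrac{d}{t}\right)^{\alpha}\right)$, where $\Gamma(s,x)$ and $\gamma(s,x)$ are the upper and lower incomplete gamma functions. -/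

import Mathlib

open MeasureTheory Real

/-- Upper incomplete gamma function `Γ(s,x) = ∫_x^∞ v^{s-1} e^{-v} dv`. -/
noncomputable def uGamma (s x : ℝ) : ℝ := ∫ v in Set.Ioi x, v ^ (s - 1) * Real.exp (-v)

/-- Lower incomplete gamma function `γ(s,x) = ∫_0^x v^{s-1} e^{-v} dv`. -/
noncomputable def lGamma (s x : ℝ) : ℝ := ∫ v in Set.Ioc 0 x, v ^ (s - 1) * Real.exp (-v)

lemma gammaInt (m s : ℝ) (hm : 0 < m) (hs : 0 < s) :
    IntegrableOn (fun h : ℝ => h ^ (s - 1) * Real.exp (-(m * h))) (Set.Ioi 0) := by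
  have h0 := Real.GammaIntegral_convergent hs
  have h1 : IntegrableOn (fun h : ℝ => Real.exp (-(m * h)) * (m * h) ^ (s - 1)) (Set.Ioi 0) := by
    have := (integrableOn_Ioi_comp_mul_left_iff
      (fun x : ℝ => Real.exp (-x) * x ^ (s - 1)) 0 hm).mpr
    rw [mul_zero] at this
    exact this h0
  have h2 := h1.const_mul (m ^ (1 - s))
  refine IntegrableOn.congr_fun h2 (fun h hh => ?_) measurableSet_Ioi
  have hh0 : (0:ℝ) < h := hh
  rw [Real.mul_rpow hm.le hh0.le,
    show m ^ (1-s) * (Real.exp (-(m*h)) * (m ^ (s-1) * h ^ (s-1)))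
      = (m ^ (1-s) * m ^ (s-1)) * (h ^ (s-1) * Real.exp (-(m*h))) by ring,
    ← Real.rpow_add hm]
  norm_num

lemma substIoi (m s c : ℝ) (hm : 0 < m) (hc : 0 < c) :
    ∫ h in Set.Ioi c, h ^ (s - 1) * Real.exp (-(m * h))
      = m ^ (-s) * ∫ v in Set.Ioi (m * c), v ^ (s - 1) * Real.exp (-v) := by
  have key := integral_comp_mul_left_Ioi (fun v : ℝ => v ^ (s - 1) * Real.exp (-v)) c hm
  have congr1 : ∫ h in Set.Ioi c, h ^ (s - 1) * Real.exp (-(m * h))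
      = ∫ h in Set.Ioi c, m ^ (1 - s) * ((m * h) ^ (s - 1) * Real.exp (-(m * h))) := by
    refine setIntegral_congr_fun measurableSet_Ioi (fun h hh => ?_)
    have hh0 : (0:ℝ) < h := hc.trans hh
    rw [Real.mul_rpow hm.le hh0.le,
      show m ^ (1-s) * (m ^ (s-1) * h ^ (s-1) * Real.exp (-(m*h)))
        = (m ^ (1-s) * m ^ (s-1)) * (h ^ (s-1) * Real.exp (-(m*h))) by ring,
      ← Real.rpow_add hm]
    norm_num
  rw [congr1, integral_const_mul, key, smul_eq_mul, ← mul_assoc, ← Real.rpow_neg_one m,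
    ← Real.rpow_add hm]
  ring_nf

lemma substIoc (m s c : ℝ) (hm : 0 < m) (hc : 0 < c) :
    ∫ h in Set.Ioc 0 c, h ^ (s - 1) * Real.exp (-(m * h))
      = m ^ (-s) * ∫ v in Set.Ioc 0 (m * c), v ^ (s - 1) * Real.exp (-v) := by
  rw [← intervalIntegral.integral_of_le hc.le,
      ← intervalIntegral.integral_of_le (by positivity : (0:ℝ) ≤ m * c)]
  have congr1 : ∫ h in (0:ℝ)..c, h ^ (s - 1) * Real.exp (-(m * h))
      = ∫ h in (0:ℝ)..c, m ^ (1 - s) * ((m * h) ^ (s - 1) * Real.exp (-(m * h))) := by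
    refine intervalIntegral.integral_congr (fun h hh => ?_)
    rw [Set.uIcc_of_le hc.le] at hh
    rw [Real.mul_rpow hm.le hh.1,
      show m ^ (1-s) * (m ^ (s-1) * h ^ (s-1) * Real.exp (-(m*h)))
        = (m ^ (1-s) * m ^ (s-1)) * (h ^ (s-1) * Real.exp (-(m*h))) by ring,
      ← Real.rpow_add hm]
    norm_num
  rw [congr1, intervalIntegral.integral_const_mul,
    intervalIntegral.integral_comp_mul_left (fun v : ℝ => v ^ (s-1) * Real.exp (-v)) hm.ne',
    mul_zero, smul_eq_mul, ← mul_assoc, ← Real.rpow_neg_one m, ← Real.rpow_add hm]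
  ring_nf

/-- LoS intensity measure under Nakagami-`m` fading (`H ~ Gamma(m,m)`)
with LoS ball of radius `d`:
`E_H[2πλ ∫_0^{min(d, t(BH)^{1/α})} r dr]
  = (πλd²/Γ(m)) Γ(m, (m/B)(d/t)^α) + (πλt²/Γ(m)) (B/m)^{2/α} γ(2/α+m, (m/B)(d/t)^α)`. -/
theorem nakagami_los_intensity_measure (lam B α d t m : ℝ)
    (hlam : 0 < lam) (hB : 0 < B) (hα : 0 < α) (hd : 0 < d) (ht : 0 < t) (hm : 0 < m) :
    (∫ h in Set.Ioi (0 : ℝ),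
        (2 * π * lam * ∫ r in Set.Ioc 0 (min d (t * (B * h) ^ ((1 : ℝ)/α))), r)
          * (m ^ m / Real.Gamma m * h ^ (m - 1) * Real.exp (-(m * h))))
      = π * lam * d ^ 2 / Real.Gamma m * uGamma m ((m/B) * (d/t) ^ α)
        + π * lam * t ^ 2 / Real.Gamma m * (B/m) ^ ((2 : ℝ)/α)
            * lGamma ((2 : ℝ)/α + m) ((m/B) * (d/t) ^ α) := by
  have hΓ : 0 < Real.Gamma m := Real.Gamma_pos_of_pos hm
  have hπ : 0 < π := Real.pi_pos
  set c : ℝ := (d/t) ^ α / B with hcdef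
  have hc : 0 < c := by positivity
  have hBc : B * c = (d/t) ^ α := by rw [hcdef]; field_simp
  have hmc : m * c = (m/B) * (d/t) ^ α := by rw [hcdef]; field_simp
  set s : ℝ := (2:ℝ)/α + m with hsdef
  have hs : 0 < s := by positivity
  -- the rewritten integrand
  set G : ℝ → ℝ := fun h =>
    π * lam * (min d (t * (B * h) ^ ((1:ℝ)/α))) ^ 2
      * (m ^ m / Real.Gamma m * h ^ (m - 1) * Real.exp (-(m * h))) with hGdef
  -- nonnegativity of the rpow factor
  have hminpos : ∀ h : ℝ, 0 < h → 0 ≤ min d (t * (B * h) ^ ((1:ℝ)/α)) := by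
    intro h hh
    have : (0:ℝ) ≤ (B * h) ^ ((1:ℝ)/α) := Real.rpow_nonneg (by positivity) _
    positivity
  -- Step A: evaluate the inner integral
  have stepA : ∀ h ∈ Set.Ioi (0:ℝ),
      (2 * π * lam * ∫ r in Set.Ioc 0 (min d (t * (B * h) ^ ((1 : ℝ)/α))), r)
        * (m ^ m / Real.Gamma m * h ^ (m - 1) * Real.exp (-(m * h))) = G h := by
    intro h hh
    have h0 : (0:ℝ) < h := hh
    rw [← intervalIntegral.integral_of_le (hminpos h h0), integral_id]
    simp only [hGdef]
    ring
  rw [setIntegral_congr_fun measurableSet_Ioi stepA]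
  -- Integrability of G on Ioi 0
  have hGmeas : AEStronglyMeasurable G (volume.restrict (Set.Ioi 0)) := by
    apply Measurable.aestronglyMeasurable
    fun_prop
  have hGint : IntegrableOn G (Set.Ioi 0) := by
    have base := (gammaInt m m hm hm).const_mul (π * lam * d ^ 2 * (m ^ m / Real.Gamma m))
    refine Integrable.mono' base hGmeas ?_
    filter_upwards [ae_restrict_mem measurableSet_Ioi] with h hh
    have h0 : (0:ℝ) < h := hh
    have h1 := hminpos h h0
    have h2 : min d (t * (B * h) ^ ((1:ℝ)/α)) ≤ d := min_le_left _ _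
    have hrp : (0:ℝ) ≤ h ^ (m - 1) := Real.rpow_nonneg h0.le _
    have hmm : (0:ℝ) ≤ m ^ m := Real.rpow_nonneg hm.le _
    have hGnn : 0 ≤ G h := by
      simp only [hGdef]; positivity
    rw [Real.norm_eq_abs, abs_of_nonneg hGnn]
    simp only [hGdef]
    have hsq : (min d (t * (B * h) ^ ((1:ℝ)/α))) ^ 2 ≤ d ^ 2 := by
      exact pow_le_pow_left₀ h1 h2 2
    have hD : (0:ℝ) ≤ m ^ m / Real.Gamma m * h ^ (m - 1) * Real.exp (-(m * h)) := by
      positivity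
    calc π * lam * (min d (t * (B * h) ^ ((1:ℝ)/α))) ^ 2
          * (m ^ m / Real.Gamma m * h ^ (m - 1) * Real.exp (-(m * h)))
        ≤ π * lam * d ^ 2 * (m ^ m / Real.Gamma m * h ^ (m - 1) * Real.exp (-(m * h))) := by
          gcongr
      _ = π * lam * d ^ 2 * (m ^ m / Real.Gamma m) * (h ^ (m-1) * Real.exp (-(m*h))) := by ring
  -- Split the integral at c
  rw [← Set.Ioc_union_Ioi_eq_Ioi hc.le,
    setIntegral_union Set.Ioc_disjoint_Ioi_same measurableSet_Ioi
      (hGint.mono_set Set.Ioc_subset_Ioi_self) (hGint.mono_set (Set.Ioi_subset_Ioi hc.le))]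
  -- Evaluate the Ioi part
  have partU : ∫ h in Set.Ioi c, G h
      = π * lam * d ^ 2 / Real.Gamma m * uGamma m ((m/B) * (d/t) ^ α) := by
    have congr2 : ∀ h ∈ Set.Ioi c, G h
        = π * lam * d ^ 2 * (m ^ m / Real.Gamma m) * (h ^ (m - 1) * Real.exp (-(m * h))) := by
      intro h hh
      have hch : c < h := hh
      have h0 : (0:ℝ) < h := hc.trans hch
      have hle : d ≤ t * (B * h) ^ ((1:ℝ)/α) := by
        have h1 : (d/t) ^ α ≤ B * h := by
          rw [← hBc]; exact mul_le_mul_of_nonneg_left hch.le hB.le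
        have h2 : ((d/t) ^ α) ^ ((1:ℝ)/α) ≤ (B * h) ^ ((1:ℝ)/α) :=
          Real.rpow_le_rpow (by positivity) h1 (by positivity)
        have h3 : ((d/t) ^ α) ^ ((1:ℝ)/α) = d / t := by
          rw [← Real.rpow_mul (by positivity : (0:ℝ) ≤ d/t), mul_one_div, div_self hα.ne',
            Real.rpow_one]
        rw [h3] at h2
        calc d = t * (d / t) := by field_simp
          _ ≤ t * (B * h) ^ ((1:ℝ)/α) := by exact mul_le_mul_of_nonneg_left h2 ht.le
      simp only [hGdef, min_eq_left hle]
      ring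
    rw [setIntegral_congr_fun measurableSet_Ioi congr2, integral_const_mul,
      substIoi m m c hm hc, hmc]
    have hm1 : m ^ m * m ^ (-m) = 1 := by
      rw [← Real.rpow_add hm]; norm_num
    unfold uGamma
    rw [show π * lam * d ^ 2 * (m ^ m / Real.Gamma m)
          * (m ^ (-m) * ∫ v in Set.Ioi ((m/B)*(d/t)^α), v ^ (m - 1) * Real.exp (-v))
        = π * lam * d ^ 2 / Real.Gamma m * (m ^ m * m ^ (-m))
          * ∫ v in Set.Ioi ((m/B)*(d/t)^α), v ^ (m - 1) * Real.exp (-v) from by ring,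
      hm1, mul_one]
  -- Evaluate the Ioc part
  have partL : ∫ h in Set.Ioc 0 c, G h
      = π * lam * t ^ 2 / Real.Gamma m * (B/m) ^ ((2:ℝ)/α)
          * lGamma s ((m/B) * (d/t) ^ α) := by
    have congr3 : ∀ h ∈ Set.Ioc 0 c, G h
        = π * lam * t ^ 2 * B ^ ((2:ℝ)/α) * (m ^ m / Real.Gamma m)
            * (h ^ (s - 1) * Real.exp (-(m * h))) := by
      intro h hh
      have h0 : (0:ℝ) < h := hh.1
      have hBh : (0:ℝ) < B * h := by positivity
      have hle : t * (B * h) ^ ((1:ℝ)/α) ≤ d := by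
        have h1 : B * h ≤ (d/t) ^ α := by
          rw [← hBc]; exact mul_le_mul_of_nonneg_left hh.2 hB.le
        have h2 : (B * h) ^ ((1:ℝ)/α) ≤ ((d/t) ^ α) ^ ((1:ℝ)/α) :=
          Real.rpow_le_rpow hBh.le h1 (by positivity)
        have h3 : ((d/t) ^ α) ^ ((1:ℝ)/α) = d / t := by
          rw [← Real.rpow_mul (by positivity : (0:ℝ) ≤ d/t), mul_one_div, div_self hα.ne',
            Real.rpow_one]
        rw [h3] at h2
        calc t * (B * h) ^ ((1:ℝ)/α) ≤ t * (d / t) := mul_le_mul_of_nonneg_left h2 ht.le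
          _ = d := by field_simp
      simp only [hGdef, min_eq_right hle]
      rw [mul_pow, ← Real.rpow_natCast ((B * h) ^ ((1:ℝ)/α)) 2, ← Real.rpow_mul hBh.le]
      norm_num
      rw [show (α⁻¹ * 2 : ℝ) = 2/α by ring,
        Real.mul_rpow hB.le h0.le,
        show s - 1 = 2/α + (m - 1) by rw [hsdef]; ring,
        Real.rpow_add h0]
      ring
    rw [setIntegral_congr_fun measurableSet_Ioc congr3, integral_const_mul,
      substIoc m s c hm hc, hmc]
    have hBm : (B/m) ^ ((2:ℝ)/α) = B ^ ((2:ℝ)/α) * m ^ (-((2:ℝ)/α)) := by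
      rw [Real.div_rpow hB.le hm.le, Real.rpow_neg hm.le, div_eq_mul_inv]
    have hmm : m ^ m * m ^ (-s) = m ^ (-((2:ℝ)/α)) := by
      rw [← Real.rpow_add hm, show m + -s = -((2:ℝ)/α) by rw [hsdef]; ring]
    unfold lGamma
    rw [show π * lam * t ^ 2 * B ^ ((2:ℝ)/α) * (m ^ m / Real.Gamma m)
          * (m ^ (-s) * ∫ v in Set.Ioc 0 ((m/B)*(d/t)^α), v ^ (s - 1) * Real.exp (-v))
        = π * lam * t ^ 2 / Real.Gamma m * (B ^ ((2:ℝ)/α) * (m ^ m * m ^ (-s)))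
          * ∫ v in Set.Ioc 0 ((m/B)*(d/t)^α), v ^ (s - 1) * Real.exp (-v) from by ring,
      hmm, hBm]
  rw [partU, partL, hsdef]
  ring
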